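/- Let 0 ≤ γ < α < n and κ ∈ (0,1). Then for all locally integrable f and all x ≠ 0, the local fractional maximal function satisfies M_{κ,α,loc} f(x) ≲ |x|^{α−γ} M_{κ,γ,loc} f(x), and the local fractional integral satisfies I_{κ,α,loc}(|f|)(x) ≲ |x|^{α−γ} M_{κ,γ,loc} f(x), with constants depending only on n, α, γ, κ. -/

import Mathlib

open MeasureTheory Metric Set ENNReal

noncomputable section

abbrev Euc (n : ℕ) := EuclideanSpace ℝ (Fin n)

/-- Extended-real weighted local Morrey norm (sup over balls centered at the origin). -/
def lmNormE (n : ℕ) (p : ℝ) (φ : ℝ → ℝ≥0∞) (w : Euc n → ℝ≥0∞) (g : Euc n → ℝ≥0∞) : ℝ≥0∞ :=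
  ⨆ (R : ℝ) (_ : 0 < R),
    ((φ R)⁻¹ * ∫⁻ x in ball (0 : Euc n) R, g x ^ p * w x) ^ (1 / p)

def lmNorm (n : ℕ) (p : ℝ) (φ : ℝ → ℝ≥0∞) (w : Euc n → ℝ≥0∞) (f : Euc n → ℝ) : ℝ≥0∞ :=
  lmNormE n p φ w (fun x => ENNReal.ofReal |f x|)

/-- Weak weighted local Morrey norm (for nonnegative extended-real valued functions). -/
def wlmNormE (n : ℕ) (q : ℝ) (ψ : ℝ → ℝ≥0∞) (v : Euc n → ℝ≥0∞) (g : Euc n → ℝ≥0∞) : ℝ≥0∞ :=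
  ⨆ (R : ℝ) (_ : 0 < R) (t : ℝ≥0∞) (_ : 0 < t),
    t * ((ψ R)⁻¹ * ∫⁻ x in {x : Euc n | x ∈ ball (0 : Euc n) R ∧ t < g x}, v x) ^ (1 / q)

def Doubling (φ : ℝ → ℝ≥0∞) : Prop := ∃ C : ℝ≥0∞, C < ⊤ ∧ ∀ R > (0 : ℝ), φ (2 * R) ≤ C * φ R

def RevDoubling (φ : ℝ → ℝ≥0∞) : Prop :=
  ∃ C : ℝ≥0∞, C < ⊤ ∧ ∀ R > (0 : ℝ), ∀ b ∈ Set.Ioo (0 : ℝ) 1,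
    ∑' j : ℕ, φ (b ^ j * R) ≤ C * φ R

/-- The fractional maximal operator `M_α` (the Hardy–Littlewood maximal
operator when `α = 0`). -/
def fracMax (n : ℕ) (α : ℝ) (g : Euc n → ℝ≥0∞) (x : Euc n) : ℝ≥0∞ :=
  ⨆ (c : Euc n) (r : ℝ) (_ : 0 < r ∧ x ∈ ball c r),
    (volume (ball c r)) ^ (α / (n : ℝ) - 1) * ∫⁻ y in ball c r, g y

/-- The fractional integral (Riesz potential) `I_α`. -/
def fracInt (n : ℕ) (α : ℝ) (g : Euc n → ℝ≥0∞) (x : Euc n) : ℝ≥0∞ :=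
  ∫⁻ y, g y * ENNReal.ofReal (‖x - y‖ ^ (α - (n : ℝ)))

/-- The Köthe dual norm of a weighted local Morrey space, evaluated on a
nonnegative (extended-real valued) function. -/
def kdualLM (n : ℕ) (p : ℝ) (φ : ℝ → ℝ≥0∞) (w : Euc n → ℝ≥0∞) (g : Euc n → ℝ≥0∞) : ℝ≥0∞ :=
  ⨆ (f : Euc n → ℝ) (_ : Measurable f ∧ lmNorm n p φ w f ≤ 1),
    ∫⁻ x, ENNReal.ofReal |f x| * g x

/-- The characteristic function of a ball, as an `ℝ≥0∞` valued function. -/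
def chiE (n : ℕ) (c : Euc n) (r : ℝ) : Euc n → ℝ≥0∞ := (ball c r).indicator fun _ => (1 : ℝ≥0∞)

/-- Samko-type Morrey parameter function `φ_λ(B) = r_B ^ λ`. -/
def phiS (lam : ℝ) : ℝ → ℝ≥0∞ := fun R => ENNReal.ofReal (R ^ lam)

/-- Power weight `w_β(x) = |x| ^ β` (raised to the exponent `s`). -/
def powW (n : ℕ) (β s : ℝ) : Euc n → ℝ≥0∞ := fun x => ENNReal.ofReal (‖x‖ ^ (β * s))

/-- The local fractional maximal operator `M_{κ,α,loc}` (over balls `B ∋ x`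
with `r_B < κ |c_B|`). -/
def locFracMax (n : ℕ) (κ α : ℝ) (g : Euc n → ℝ≥0∞) (x : Euc n) : ℝ≥0∞ :=
  ⨆ (c : Euc n) (r : ℝ) (_ : 0 < r ∧ r < κ * ‖c‖ ∧ x ∈ ball c r),
    (volume (ball c r)) ^ (α / (n : ℝ) - 1) * ∫⁻ y in ball c r, g y

/-- The local fractional integral `I_{κ,α,loc}`. -/
def locFracInt (n : ℕ) (κ α : ℝ) (g : Euc n → ℝ≥0∞) (x : Euc n) : ℝ≥0∞ :=
  ∫⁻ y in ball x (κ * ‖x‖), g y * ENNReal.ofReal (‖x - y‖ ^ (α - (n : ℝ)))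

lemma vol_ball_rpow (n : ℕ) (hn : 0 < n) (c : Euc n) {r : ℝ} (hr : 0 < r) (e : ℝ) :
    volume (ball c r) ^ e =
      ENNReal.ofReal (r ^ ((n : ℝ) * e)) * volume (ball (0 : Euc n) 1) ^ e := by
  haveI : Nonempty (Fin n) := ⟨⟨0, hn⟩⟩
  have h1 : volume (ball c r) = ENNReal.ofReal (r ^ ((n:ℝ))) * volume (ball (0 : Euc n) 1) := by
    rw [Real.rpow_natCast, MeasureTheory.Measure.addHaar_ball volume c hr.le,
      finrank_euclideanSpace_fin]
  rw [h1, ENNReal.mul_rpow_of_ne_top ofReal_ne_top measure_ball_lt_top.ne,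
    ENNReal.ofReal_rpow_of_pos (Real.rpow_pos_of_pos hr _), ← Real.rpow_mul hr.le]

/-- key ball estimate -/
lemma ball_int_le (n : ℕ) (hn : 0 < n) (κ γ : ℝ) (hγ : γ < n) (g : Euc n → ℝ≥0∞) (x : Euc n)
    {c : Euc n} {r : ℝ} (hr : 0 < r) (hrc : r < κ * ‖c‖) (hx : x ∈ ball c r) :
    ∫⁻ y in ball c r, g y ≤
      ENNReal.ofReal (r ^ ((n : ℝ) - γ)) * volume (ball (0 : Euc n) 1) ^ (1 - γ / (n : ℝ)) *
        locFracMax n κ γ g x := by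
  have hv0 : volume (ball c r) ≠ 0 := (measure_ball_pos volume c hr).ne'
  have hvt : volume (ball c r) ≠ ⊤ := measure_ball_lt_top.ne
  have hM : volume (ball c r) ^ (γ / (n:ℝ) - 1) * ∫⁻ y in ball c r, g y ≤
      locFracMax n κ γ g x :=
    le_iSup_of_le c (le_iSup_of_le r (le_iSup_of_le ⟨hr, hrc, hx⟩ le_rfl))
  have h1 : ∫⁻ y in ball c r, g y =
      volume (ball c r) ^ (1 - γ / (n:ℝ)) *
        (volume (ball c r) ^ (γ / (n:ℝ) - 1) * ∫⁻ y in ball c r, g y) := by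
    rw [← mul_assoc, ← ENNReal.rpow_add _ _ hv0 hvt]
    norm_num
  rw [h1, vol_ball_rpow n hn c hr]
  have hne : (n : ℝ) ≠ 0 := Nat.cast_ne_zero.mpr hn.ne'
  have he : (n : ℝ) * (1 - γ / (n:ℝ)) = (n:ℝ) - γ := by field_simp
  rw [he]
  exact mul_le_mul_right hM _

/-- Part 1: maximal function bound. -/
lemma part1 (n : ℕ) (hn : 0 < n) (α γ : ℝ) (hγα : γ < α) (hγn : γ < n) (κ : ℝ)
    (hκ : κ ∈ Set.Ioo (0 : ℝ) 1) (g : Euc n → ℝ≥0∞) (x : Euc n) :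
    locFracMax n κ α g x ≤
      ENNReal.ofReal ((κ / (1 - κ)) ^ (α - γ)) * volume (ball (0 : Euc n) 1) ^ ((α - γ) / (n:ℝ))
        * ENNReal.ofReal (‖x‖ ^ (α - γ)) * locFracMax n κ γ g x := by
  refine iSup_le fun c => iSup_le fun r => iSup_le fun h => ?_
  obtain ⟨hr, hrc, hx⟩ := h
  have hv0 : volume (ball c r) ≠ 0 := (measure_ball_pos volume c hr).ne'
  have hvt : volume (ball c r) ≠ ⊤ := measure_ball_lt_top.ne
  have hsplit : volume (ball c r) ^ (α / (n:ℝ) - 1) =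
      volume (ball c r) ^ ((α - γ) / (n:ℝ)) * volume (ball c r) ^ (γ / (n:ℝ) - 1) := by
    rw [← ENNReal.rpow_add _ _ hv0 hvt]
    ring_nf
  rw [hsplit, mul_assoc]
  have hM : volume (ball c r) ^ (γ / (n:ℝ) - 1) * ∫⁻ y in ball c r, g y ≤
      locFracMax n κ γ g x :=
    le_iSup_of_le c (le_iSup_of_le r (le_iSup_of_le ⟨hr, hrc, hx⟩ le_rfl))
  have hrx : r ≤ κ / (1 - κ) * ‖x‖ := by
    have h1 : ‖c‖ - ‖x‖ ≤ dist x c := by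
      rw [dist_comm, dist_eq_norm]
      have := norm_sub_norm_le c x
      linarith
    have h2 : dist x c < r := mem_ball.mp hx
    have hκ1 : 0 < 1 - κ := by linarith [hκ.2]
    rw [div_mul_eq_mul_div, le_div_iff₀ hκ1]
    nlinarith [hκ.1]
  have hK : (0:ℝ) ≤ κ / (1 - κ) := div_nonneg hκ.1.le (by linarith [hκ.2])
  have hrpow : r ^ (α - γ) ≤ (κ / (1 - κ)) ^ (α - γ) * ‖x‖ ^ (α - γ) := by
    rw [← Real.mul_rpow hK (norm_nonneg x)]
    exact Real.rpow_le_rpow hr.le hrx (by linarith)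
  have hvol : volume (ball c r) ^ ((α - γ) / (n:ℝ)) ≤
      ENNReal.ofReal ((κ / (1 - κ)) ^ (α - γ)) * volume (ball (0 : Euc n) 1) ^ ((α - γ) / (n:ℝ))
        * ENNReal.ofReal (‖x‖ ^ (α - γ)) := by
    haveI : Nonempty (Fin n) := ⟨⟨0, hn⟩⟩
    have hne : (n : ℝ) ≠ 0 := Nat.cast_ne_zero.mpr hn.ne'
    have he : (n : ℝ) * ((α - γ) / (n:ℝ)) = α - γ := by field_simp
    rw [vol_ball_rpow n hn c hr, he]
    calc ENNReal.ofReal (r ^ (α - γ)) * volume (ball (0 : Euc n) 1) ^ ((α - γ) / (n:ℝ))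
        ≤ ENNReal.ofReal ((κ / (1 - κ)) ^ (α - γ) * ‖x‖ ^ (α - γ)) *
            volume (ball (0 : Euc n) 1) ^ ((α - γ) / (n:ℝ)) := by
          exact mul_le_mul_left (ENNReal.ofReal_le_ofReal hrpow) _
      _ = _ := by
          rw [ENNReal.ofReal_mul (Real.rpow_nonneg hK _)]
          ring
  exact mul_le_mul' hvol hM

lemma sup_balls {n : ℕ} {h : Euc n → ℝ≥0∞} (hh : Measurable h) (x : Euc n) (R : ℝ) :
    ∫⁻ y in ball x R, h y ≤
      ⨆ k : ℕ, ∫⁻ y in ball x (R * (1 - (2⁻¹:ℝ) ^ (k+1))), h y := by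
  by_cases hR : 0 < R
  swap
  · have : ball x R = ∅ := ball_eq_empty.mpr (not_lt.mp hR)
    simp [this]
  have hmeas : ∀ k : ℕ, Measurable ((ball x (R * (1 - (2⁻¹:ℝ) ^ (k+1)))).indicator h) :=
    fun k => hh.indicator measurableSet_ball
  have hmono : Monotone (fun k : ℕ => (ball x (R * (1 - (2⁻¹:ℝ) ^ (k+1)))).indicator h) := by
    intro a b hab
    refine Set.indicator_le_indicator_of_subset (ball_subset_ball ?_) (fun _ => zero_le)
    have : (2⁻¹:ℝ) ^ (b+1) ≤ (2⁻¹:ℝ) ^ (a+1) :=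
      pow_le_pow_of_le_one (by norm_num) (by norm_num) (by omega)
    nlinarith
  calc ∫⁻ y in ball x R, h y = ∫⁻ y, (ball x R).indicator h y :=
        (lintegral_indicator measurableSet_ball h).symm
    _ ≤ ∫⁻ y, ⨆ k : ℕ, (ball x (R * (1 - (2⁻¹:ℝ) ^ (k+1)))).indicator h y := by
        refine lintegral_mono fun y => ?_
        by_cases hy : y ∈ ball x R
        · have hd : dist y x < R := mem_ball.mp hy
          have hd0 : (0:ℝ) ≤ dist y x := dist_nonneg
          obtain ⟨k, hk⟩ := exists_pow_lt_of_lt_one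
            (show (0:ℝ) < 1 - dist y x / R by
              have : dist y x / R < 1 := (div_lt_one hR).mpr hd
              linarith)
            (show (2⁻¹:ℝ) < 1 by norm_num)
          refine le_iSup_of_le k ?_
          have h1 : (2⁻¹:ℝ) ^ (k+1) ≤ (2⁻¹:ℝ) ^ k :=
            pow_le_pow_of_le_one (by norm_num) (by norm_num) (by omega)
          have hyk : y ∈ ball x (R * (1 - (2⁻¹:ℝ) ^ (k+1))) := by
            rw [mem_ball]
            have h2 : dist y x / R < 1 - (2⁻¹:ℝ) ^ (k+1) := by linarith
            calc dist y x = R * (dist y x / R) := by field_simp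
              _ < R * (1 - (2⁻¹:ℝ) ^ (k+1)) := by
                  exact mul_lt_mul_of_pos_left h2 hR
          rw [Set.indicator_of_mem hy, Set.indicator_of_mem hyk]
        · simp [Set.indicator_of_notMem hy]
    _ = ⨆ k : ℕ, ∫⁻ y, (ball x (R * (1 - (2⁻¹:ℝ) ^ (k+1)))).indicator h y :=
        lintegral_iSup hmeas hmono
    _ = _ := by
        refine iSup_congr fun k => ?_
        exact lintegral_indicator measurableSet_ball h

lemma real_id (α γ nr : ℝ) {ρ : ℝ} (hρ : 0 < ρ) (j : ℕ) :
    ((2⁻¹:ℝ) ^ (j+1) * ρ) ^ (α - nr) * ((2⁻¹:ℝ) ^ j * ρ) ^ (nr - γ) =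
      (2⁻¹:ℝ) ^ (α - nr) * ((2⁻¹:ℝ) ^ (α - γ)) ^ j * ρ ^ (α - γ) := by
  have h2 : (0:ℝ) < 2⁻¹ := by norm_num
  rw [Real.mul_rpow (by positivity) hρ.le, Real.mul_rpow (by positivity) hρ.le,
    ← Real.rpow_natCast (2⁻¹:ℝ) (j+1), ← Real.rpow_natCast (2⁻¹:ℝ) j,
    ← Real.rpow_natCast ((2⁻¹:ℝ) ^ (α - γ)) j,
    ← Real.rpow_mul h2.le, ← Real.rpow_mul h2.le, ← Real.rpow_mul h2.le,
    mul_mul_mul_comm, ← Real.rpow_add h2, ← Real.rpow_add hρ,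
    ← Real.rpow_add h2]
  congr 1 <;> push_cast <;> ring

lemma int_rho (n : ℕ) (hn : 0 < n) (α γ : ℝ) (hγα : γ < α) (hγn : γ < n) (hαn : α < n)
    (κ : ℝ) (hκ : κ ∈ Set.Ioo (0 : ℝ) 1) (g : Euc n → ℝ≥0∞) (hg : Measurable g) (x : Euc n)
    {ρ : ℝ} (hρ : 0 < ρ) (hρx : ρ < κ * ‖x‖) :
    ∫⁻ y in ball x ρ, g y * ENNReal.ofReal (‖x - y‖ ^ (α - (n:ℝ))) ≤
      ENNReal.ofReal ((2⁻¹:ℝ) ^ (α - (n:ℝ))) * (∑' j : ℕ, ENNReal.ofReal (((2⁻¹:ℝ) ^ (α - γ)) ^ j))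
        * volume (ball (0 : Euc n) 1) ^ (1 - γ / (n:ℝ)) * ENNReal.ofReal (ρ ^ (α - γ))
        * locFracMax n κ γ g x := by
  classical
  set h : Euc n → ℝ≥0∞ := fun y => g y * ENNReal.ofReal (‖x - y‖ ^ (α - (n:ℝ))) with hh
  set A : ℕ → Set (Euc n) := fun j =>
    ball x ((2⁻¹:ℝ) ^ j * ρ) \ ball x ((2⁻¹:ℝ) ^ (j+1) * ρ) with hA
  have cover : ball x ρ ⊆ {x} ∪ ⋃ j, A j := by
    intro y hy
    by_cases hxy : y = x
    · exact Or.inl (by simp [hxy])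
    refine Or.inr ?_
    have hd0 : 0 < dist y x := dist_pos.mpr hxy
    have hd : dist y x < ρ := mem_ball.mp hy
    have hex : ∃ j : ℕ, (2⁻¹:ℝ) ^ (j+1) * ρ ≤ dist y x := by
      obtain ⟨m, hm⟩ := exists_pow_lt_of_lt_one (div_pos hd0 hρ) (show (2⁻¹:ℝ) < 1 by norm_num)
      refine ⟨m, ?_⟩
      have h1 : (2⁻¹:ℝ) ^ (m+1) ≤ (2⁻¹:ℝ) ^ m :=
        pow_le_pow_of_le_one (by norm_num) (by norm_num) (by omega)
      have h2 : (2⁻¹:ℝ) ^ m * ρ < dist y x := by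
        rw [lt_div_iff₀ hρ] at hm; linarith
      nlinarith
    set j := Nat.find hex with hj
    have hj1 : (2⁻¹:ℝ) ^ (j+1) * ρ ≤ dist y x := Nat.find_spec hex
    have hj2 : dist y x < (2⁻¹:ℝ) ^ j * ρ := by
      rcases Nat.eq_zero_or_pos j with h0 | hpos
      · rw [h0]; simpa using hd
      · obtain ⟨m, hm⟩ := Nat.exists_eq_succ_of_ne_zero hpos.ne'
        have hmin := Nat.find_min hex (show m < j by omega)
        rw [hm]
        simpa [Nat.succ_eq_add_one] using lt_of_not_ge hmin
    exact mem_iUnion.mpr ⟨j, mem_ball.mpr hj2, fun hmem => absurd (mem_ball.mp hmem) (not_lt.mpr hj1)⟩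
  have hbound : ∀ j : ℕ, ∫⁻ y in A j, h y ≤
      ENNReal.ofReal (((2⁻¹:ℝ) ^ (j+1) * ρ) ^ (α - (n:ℝ))) *
        (ENNReal.ofReal (((2⁻¹:ℝ) ^ j * ρ) ^ ((n:ℝ) - γ)) *
          volume (ball (0 : Euc n) 1) ^ (1 - γ / (n:ℝ)) * locFracMax n κ γ g x) := by
    intro j
    have hrj : (0:ℝ) < (2⁻¹:ℝ) ^ j * ρ := by positivity
    have hrj1 : (0:ℝ) < (2⁻¹:ℝ) ^ (j+1) * ρ := by positivity
    have step1 : ∫⁻ y in A j, h y ≤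
        ∫⁻ y in A j, ENNReal.ofReal (((2⁻¹:ℝ) ^ (j+1) * ρ) ^ (α - (n:ℝ))) * g y := by
      refine setLIntegral_mono (hg.const_mul _) fun y hy => ?_
      have hdy : (2⁻¹:ℝ) ^ (j+1) * ρ ≤ dist y x := not_lt.mp (fun hc => hy.2 (mem_ball.mpr hc))
      have hnorm : ‖x - y‖ = dist y x := by rw [dist_comm, dist_eq_norm]
      have hker : ‖x - y‖ ^ (α - (n:ℝ)) ≤ ((2⁻¹:ℝ) ^ (j+1) * ρ) ^ (α - (n:ℝ)) := by
        rw [hnorm]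
        exact Real.rpow_le_rpow_of_nonpos hrj1 hdy (by push_cast; linarith)
      calc h y = g y * ENNReal.ofReal (‖x - y‖ ^ (α - (n:ℝ))) := rfl
        _ ≤ g y * ENNReal.ofReal (((2⁻¹:ℝ) ^ (j+1) * ρ) ^ (α - (n:ℝ))) :=
            mul_le_mul_right (ENNReal.ofReal_le_ofReal hker) _
        _ = _ := mul_comm _ _
    have step2 : ∫⁻ y in A j, ENNReal.ofReal (((2⁻¹:ℝ) ^ (j+1) * ρ) ^ (α - (n:ℝ))) * g y =
        ENNReal.ofReal (((2⁻¹:ℝ) ^ (j+1) * ρ) ^ (α - (n:ℝ))) * ∫⁻ y in A j, g y :=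
      lintegral_const_mul _ hg
    have step3 : ∫⁻ y in A j, g y ≤ ∫⁻ y in ball x ((2⁻¹:ℝ) ^ j * ρ), g y :=
      lintegral_mono_set diff_subset
    have step4 := ball_int_le n hn κ γ hγn g x (c := x) hrj
      (by
        have h1 : (2⁻¹:ℝ) ^ j ≤ 1 := pow_le_one₀ (by norm_num) (by norm_num)
        nlinarith [hρx])
      (mem_ball_self hrj)
    calc ∫⁻ y in A j, h y ≤ _ := step1
      _ = _ := step2
      _ ≤ _ := mul_le_mul_right (step3.trans step4) _
  calc ∫⁻ y in ball x ρ, h y ≤ ∫⁻ y in {x} ∪ ⋃ j, A j, h y := lintegral_mono_set cover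
    _ ≤ (∫⁻ y in {x}, h y) + ∫⁻ y in ⋃ j, A j, h y := lintegral_union_le _ _ _
    _ = ∫⁻ y in ⋃ j, A j, h y := by
        rw [lintegral_singleton]
        have hx0 : h x = 0 := by
          simp [hh, Real.zero_rpow (show α - (n:ℝ) ≠ 0 by push_cast; linarith)]
        rw [hx0, zero_mul, zero_add]
    _ ≤ ∑' j : ℕ, ∫⁻ y in A j, h y := lintegral_iUnion_le _ _
    _ ≤ ∑' j : ℕ, ENNReal.ofReal (((2⁻¹:ℝ) ^ (j+1) * ρ) ^ (α - (n:ℝ))) *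
        (ENNReal.ofReal (((2⁻¹:ℝ) ^ j * ρ) ^ ((n:ℝ) - γ)) *
          volume (ball (0 : Euc n) 1) ^ (1 - γ / (n:ℝ)) * locFracMax n κ γ g x) :=
        ENNReal.tsum_le_tsum hbound
    _ = _ := by
        have hterm : ∀ j : ℕ, ENNReal.ofReal (((2⁻¹:ℝ) ^ (j+1) * ρ) ^ (α - (n:ℝ))) *
            (ENNReal.ofReal (((2⁻¹:ℝ) ^ j * ρ) ^ ((n:ℝ) - γ)) *
              volume (ball (0 : Euc n) 1) ^ (1 - γ / (n:ℝ)) * locFracMax n κ γ g x) =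
            (ENNReal.ofReal ((2⁻¹:ℝ) ^ (α - (n:ℝ))) * volume (ball (0 : Euc n) 1) ^ (1 - γ / (n:ℝ))
              * ENNReal.ofReal (ρ ^ (α - γ)) * locFracMax n κ γ g x)
              * ENNReal.ofReal (((2⁻¹:ℝ) ^ (α - γ)) ^ j) := by
          intro j
          rw [← mul_assoc, ← mul_assoc, ← ENNReal.ofReal_mul (by positivity), real_id α γ (n:ℝ) hρ j]
          rw [ENNReal.ofReal_mul (by positivity), ENNReal.ofReal_mul (by positivity)]
          ring
        rw [tsum_congr hterm, ENNReal.tsum_mul_left]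
        ring

theorem stmt12 (n : ℕ) (hn : 0 < n) (α γ : ℝ) (hγ : 0 ≤ γ) (hγα : γ < α) (hαn : α < n)
    (κ : ℝ) (hκ : κ ∈ Set.Ioo (0 : ℝ) 1) :
    ∃ C : ℝ≥0∞, C < ⊤ ∧ ∀ f : Euc n → ℝ, Measurable f → ∀ x : Euc n, x ≠ 0 →
      locFracMax n κ α (fun y => ENNReal.ofReal |f y|) x ≤
        C * ENNReal.ofReal (‖x‖ ^ (α - γ)) *
          locFracMax n κ γ (fun y => ENNReal.ofReal |f y|) x ∧
      locFracInt n κ α (fun y => ENNReal.ofReal |f y|) x ≤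
        C * ENNReal.ofReal (‖x‖ ^ (α - γ)) *
          locFracMax n κ γ (fun y => ENNReal.ofReal |f y|) x := by
  have hγn : γ < (n : ℝ) := lt_trans hγα hαn
  set V : ℝ≥0∞ := volume (ball (0 : Euc n) 1) with hV
  set T : ℝ≥0∞ := ∑' j : ℕ, ENNReal.ofReal (((2⁻¹:ℝ) ^ (α - γ)) ^ j) with hT
  set C₁ : ℝ≥0∞ := ENNReal.ofReal ((κ / (1 - κ)) ^ (α - γ)) * V ^ ((α - γ) / (n:ℝ)) with hC₁
  set C₂ : ℝ≥0∞ := ENNReal.ofReal ((2⁻¹:ℝ) ^ (α - (n:ℝ))) * T * V ^ (1 - γ / (n:ℝ)) with hC₂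
  have hVtop : V ≠ ⊤ := measure_ball_lt_top.ne
  have hTtop : T < ⊤ := by
    have hs : (2⁻¹:ℝ) ^ (α - γ) < 1 :=
      Real.rpow_lt_one (by norm_num) (by norm_num) (by linarith)
    have hs0 : (0:ℝ) ≤ (2⁻¹:ℝ) ^ (α - γ) := Real.rpow_nonneg (by norm_num) _
    have : T = (1 - ENNReal.ofReal ((2⁻¹:ℝ) ^ (α - γ)))⁻¹ := by
      rw [hT]
      rw [show (fun j : ℕ => ENNReal.ofReal (((2⁻¹:ℝ) ^ (α - γ)) ^ j)) =
        (fun j : ℕ => (ENNReal.ofReal ((2⁻¹:ℝ) ^ (α - γ))) ^ j) from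
          funext fun j => (ENNReal.ofReal_pow hs0 j)]
      exact ENNReal.tsum_geometric _
    rw [this]
    refine ENNReal.inv_lt_top.mpr (tsub_pos_of_lt ?_)
    exact (ENNReal.ofReal_lt_one).mpr hs
  refine ⟨C₁ + C₂ * ENNReal.ofReal (κ ^ (α - γ)), ?_, ?_⟩
  · refine ENNReal.add_lt_top.mpr ⟨?_, ?_⟩
    · exact ENNReal.mul_lt_top ofReal_lt_top
        (ENNReal.rpow_lt_top_of_nonneg (div_nonneg (by linarith) (Nat.cast_nonneg n)) hVtop)
    · exact ENNReal.mul_lt_top (ENNReal.mul_lt_top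
        (ENNReal.mul_lt_top ofReal_lt_top hTtop)
        (ENNReal.rpow_lt_top_of_nonneg (by
          have hx : γ / (n:ℝ) < 1 := by
            rw [div_lt_one (by exact_mod_cast hn)]
            exact hγn
          linarith) hVtop)) ofReal_lt_top
  intro f hf x hx
  set g : Euc n → ℝ≥0∞ := fun y => ENNReal.ofReal |f y| with hg
  have hgm : Measurable g := by fun_prop
  set M : ℝ≥0∞ := locFracMax n κ γ g x with hM
  constructor
  · calc locFracMax n κ α g x ≤ C₁ * ENNReal.ofReal (‖x‖ ^ (α - γ)) * M :=
        part1 n hn α γ hγα hγn κ hκ g x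
      _ ≤ (C₁ + C₂ * ENNReal.ofReal (κ ^ (α - γ))) * ENNReal.ofReal (‖x‖ ^ (α - γ)) * M := by
          gcongr
          exact le_self_add
  · have hR : 0 < κ * ‖x‖ := mul_pos hκ.1 (norm_pos_iff.mpr hx)
    have hmeas : Measurable fun y => g y * ENNReal.ofReal (‖x - y‖ ^ (α - (n:ℝ))) := by fun_prop
    have step : locFracInt n κ α g x ≤ C₂ * ENNReal.ofReal ((κ * ‖x‖) ^ (α - γ)) * M := by
      refine (sup_balls hmeas x (κ * ‖x‖)).trans (iSup_le fun k => ?_)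
      have hfac1 : (2⁻¹:ℝ) ^ (k+1) < 1 := pow_lt_one₀ (by norm_num) (by norm_num) (by omega)
      have hfac0 : (0:ℝ) < (2⁻¹:ℝ) ^ (k+1) := by positivity
      have hρ : 0 < κ * ‖x‖ * (1 - (2⁻¹:ℝ) ^ (k+1)) := by nlinarith
      have hρx : κ * ‖x‖ * (1 - (2⁻¹:ℝ) ^ (k+1)) < κ * ‖x‖ := by nlinarith
      refine (int_rho n hn α γ hγα hγn hαn κ hκ g hgm x hρ hρx).trans ?_
      have hρpow : (κ * ‖x‖ * (1 - (2⁻¹:ℝ) ^ (k+1))) ^ (α - γ) ≤ (κ * ‖x‖) ^ (α - γ) :=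
        Real.rpow_le_rpow hρ.le hρx.le (by linarith)
      rw [hC₂]
      exact mul_le_mul_left (mul_le_mul_right (ENNReal.ofReal_le_ofReal hρpow) _) _
    refine step.trans ?_
    have hre : ENNReal.ofReal ((κ * ‖x‖) ^ (α - γ)) =
        ENNReal.ofReal (κ ^ (α - γ)) * ENNReal.ofReal (‖x‖ ^ (α - γ)) := by
      rw [Real.mul_rpow hκ.1.le (norm_nonneg x), ENNReal.ofReal_mul (Real.rpow_nonneg hκ.1.le _)]
    rw [hre]
    calc C₂ * (ENNReal.ofReal (κ ^ (α - γ)) * ENNReal.ofReal (‖x‖ ^ (α - γ))) * M =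
        (C₂ * ENNReal.ofReal (κ ^ (α - γ))) * ENNReal.ofReal (‖x‖ ^ (α - γ)) * M := by ring
      _ ≤ (C₁ + C₂ * ENNReal.ofReal (κ ^ (α - γ))) * ENNReal.ofReal (‖x‖ ^ (α - γ)) * M := by
          gcongr
          exact le_add_self
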